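/- Let P_1, …, P_n be pairwise orthogonal projections on ℂ^d with ∑_i P_i = 1, and let ρ be a density matrix on ℂ^d. Then the robustness of block coherence is bounded by the ℓ₁-norm of block coherence: inf { s ≥ 0 : ∃ density matrix δ with ρ ≤ (1 + s)·Δ[δ] } ≤ ∑_{i ≠ j} ‖ P_i ρ P_j ‖₁. -/

import Mathlib

open Matrix
open scoped ComplexOrder

/-- The trace norm `‖A‖₁ = tr √(Aᴴ A)` of a complex matrix. -/
noncomputable def traceNorm {m n : Type*} [Fintype m] [Fintype n] [DecidableEq n]
    (A : Matrix m n ℂ) : ℝ :=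
  ((Matrix.posSemidef_conjTranspose_mul_self A).1.eigenvectorUnitary.1 *
      diagonal (((↑) : ℝ → ℂ) ∘ Real.sqrt ∘ (Matrix.posSemidef_conjTranspose_mul_self A).1.eigenvalues) *
      (star (Matrix.posSemidef_conjTranspose_mul_self A).1.eigenvectorUnitary : Matrix n n ℂ)).trace.re

section SqrtPort

open scoped MatrixOrder

/-- Square root of a positive semidefinite matrix (ported from old Mathlib). -/
noncomputable def Matrix.PosSemidef.sqrt {n : Type*} [Fintype n] [DecidableEq n]
    {A : Matrix n n ℂ} (hA : A.PosSemidef) : Matrix n n ℂ :=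
  hA.1.eigenvectorUnitary.1 * diagonal (((↑) : ℝ → ℂ) ∘ Real.sqrt ∘ hA.1.eigenvalues) *
    (star hA.1.eigenvectorUnitary : Matrix n n ℂ)

lemma Matrix.PosSemidef.sqrt_eq_cfcSqrt {n : Type*} [Fintype n] [DecidableEq n]
    {A : Matrix n n ℂ} (hA : A.PosSemidef) : hA.sqrt = CFC.sqrt A := by
  rw [CFC.sqrt_eq_cfc, cfc_nnreal_eq_real _ A, hA.1.cfc_eq]
  simp only [IsHermitian.cfc, Unitary.conjStarAlgAut_apply, Matrix.PosSemidef.sqrt]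
  congr 3
  funext i
  simp [Real.coe_sqrt, Real.coe_toNNReal', max_eq_left (hA.eigenvalues_nonneg i)]

lemma Matrix.PosSemidef.posSemidef_sqrt {n : Type*} [Fintype n] [DecidableEq n]
    {A : Matrix n n ℂ} (hA : A.PosSemidef) : hA.sqrt.PosSemidef := by
  rw [hA.sqrt_eq_cfcSqrt]
  exact Matrix.nonneg_iff_posSemidef.mp (CFC.sqrt_nonneg A)

lemma Matrix.PosSemidef.sqrt_mul_self {n : Type*} [Fintype n] [DecidableEq n]
    {A : Matrix n n ℂ} (hA : A.PosSemidef) : hA.sqrt * hA.sqrt = A := by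
  rw [hA.sqrt_eq_cfcSqrt]
  exact CFC.sqrt_mul_sqrt_self A hA.nonneg

lemma Matrix.PosSemidef.eq_sqrt_of_sq_eq {n : Type*} [Fintype n] [DecidableEq n]
    {A B : Matrix n n ℂ} (hA : A.PosSemidef) (hB : B.PosSemidef) (hAB : A ^ 2 = B) :
    A = hB.sqrt := by
  rw [hB.sqrt_eq_cfcSqrt, eq_comm, CFC.sqrt_eq_iff _ _ hB.nonneg hA.nonneg, ← sq, hAB]

end SqrtPort

section Aux

variable {n : Type*} [Fintype n] [DecidableEq n]

omit [DecidableEq n] in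
lemma psd_smul' {r : ℝ} (hr : 0 ≤ r) {A : Matrix n n ℂ} (hA : A.PosSemidef) :
    (r • A).PosSemidef := by
  exact hA.smul hr

omit [DecidableEq n] in
lemma psd_sum' {ι : Type*} (s : Finset ι) (f : ι → Matrix n n ℂ)
    (h : ∀ i ∈ s, (f i).PosSemidef) : (∑ i ∈ s, f i).PosSemidef :=
  Finset.sum_induction f _ (fun _ _ ha hb => ha.add hb) .zero h

lemma psd_trace_re' {A : Matrix n n ℂ} (hA : A.PosSemidef) :
    A.trace = (A.trace.re : ℂ) ∧ 0 ≤ A.trace.re := by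
  have hd : ∀ i, 0 ≤ A i i := by
    intro i
    exact hA.diag_nonneg
  have htr : 0 ≤ A.trace := by
    rw [Matrix.trace]
    exact Finset.sum_nonneg fun i _ => hd i
  rw [Complex.le_def] at htr
  refine ⟨?_, htr.1⟩
  rw [← Complex.re_add_im A.trace, ← htr.2]
  simp

lemma traceNorm_nonneg' {m : Type*} [Fintype m] (A : Matrix m n ℂ) : 0 ≤ traceNorm A :=
  (psd_trace_re' (Matrix.posSemidef_conjTranspose_mul_self A).posSemidef_sqrt).2

lemma sqrt_support' {X Q : Matrix n n ℂ} (hX : X.PosSemidef) (hQ : Qᴴ = Q)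
    (hl : Q * X = X) : hX.sqrt * Q = hX.sqrt ∧ Q * hX.sqrt = hX.sqrt := by
  have hr : X * Q = X := by
    calc X * Q = (Q * Xᴴ)ᴴ := by rw [conjTranspose_mul, conjTranspose_conjTranspose, hQ]
    _ = (Q * X)ᴴ := by rw [hX.1]
    _ = X := by rw [hl, hX.1]
  set S := hX.sqrt with hS
  have hSh : Sᴴ = S := hX.posSemidef_sqrt.1
  have h0 : (S * (1 - Q))ᴴ * (S * (1 - Q)) = 0 := by
    have h1Q : (1 - Q)ᴴ = 1 - Q := by rw [conjTranspose_sub, conjTranspose_one, hQ]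
    rw [conjTranspose_mul, h1Q, hSh, mul_assoc, ← mul_assoc S S, hX.sqrt_mul_self]
    rw [← mul_assoc, sub_mul, one_mul, hl, sub_self, zero_mul]
  have h1 : S * (1 - Q) = 0 := conjTranspose_mul_self_eq_zero.mp h0
  have h2 : S * Q = S := by
    rw [mul_sub, mul_one, sub_eq_zero] at h1
    exact h1.symm
  refine ⟨h2, ?_⟩
  calc Q * S = (S * Q)ᴴ := by rw [conjTranspose_mul, hSh, hQ]
  _ = S := by rw [h2, hSh]

lemma sqrt_sq_sub_psd' {H : Matrix n n ℂ} (hH : H.IsHermitian)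
    (hH2 : Matrix.PosSemidef (H ^ 2)) : (hH2.sqrt - H).PosSemidef := by
  set U : Matrix n n ℂ := (hH.eigenvectorUnitary : Matrix n n ℂ) with hU
  have hUU : (star U) * U = 1 := Matrix.UnitaryGroup.star_mul_self hH.eigenvectorUnitary
  set lam := hH.eigenvalues
  set dabs : Matrix n n ℂ := diagonal (fun i => ((|lam i| : ℝ) : ℂ)) with hdabs
  have hdabsPSD : dabs.PosSemidef := by
    refine Matrix.posSemidef_diagonal_iff.mpr fun i => ?_
    exact_mod_cast Complex.zero_le_real.mpr (abs_nonneg _)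
  have hSpsd : (U * dabs * (star U)).PosSemidef := by
    have := hdabsPSD.mul_mul_conjTranspose_same U
    simpa [star_eq_conjTranspose] using this
  have hspec : H = U * diagonal ((↑) ∘ lam) * (star U) := hH.spectral_theorem
  have hsq : (U * dabs * (star U)) ^ 2 = H ^ 2 := by
    rw [pow_two, pow_two]
    calc U * dabs * star U * (U * dabs * star U)
        = U * (dabs * ((star U * U) * dabs)) * star U := by
          simp only [mul_assoc]
      _ = U * (diagonal ((↑) ∘ lam) * diagonal ((↑) ∘ lam)) * star U := by
          rw [hUU, one_mul]
          have hdd : dabs * dabs = diagonal ((↑) ∘ lam) * diagonal ((↑) ∘ lam) := by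
            rw [hdabs, diagonal_mul_diagonal, diagonal_mul_diagonal]
            congr 1
            funext i
            simp only [Function.comp_apply, ← Complex.ofReal_mul, abs_mul_abs_self]
          rw [hdd]
      _ = H * H := by
          rw [hspec]
          calc U * (diagonal ((↑) ∘ lam) * diagonal ((↑) ∘ lam)) * star U
              = U * (diagonal ((↑) ∘ lam) * ((star U * U) * diagonal ((↑) ∘ lam))) * star U := by
                rw [hUU, one_mul]
            _ = U * diagonal ((↑) ∘ lam) * star U * (U * diagonal ((↑) ∘ lam) * star U) := by
                simp only [mul_assoc]
  have hsqrt : U * dabs * (star U) = hH2.sqrt := hSpsd.eq_sqrt_of_sq_eq hH2 hsq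
  rw [← hsqrt, hspec]
  have hdiff : U * dabs * star U - U * diagonal ((↑) ∘ lam) * star U
      = U * (diagonal (fun i => (((|lam i| : ℝ) - lam i : ℝ) : ℂ))) * star U := by
    rw [← sub_mul, ← mul_sub, hdabs, diagonal_sub]
    congr 2
    funext i
    simp only [Function.comp_apply, Complex.ofReal_sub]
  rw [hdiff]
  have hpsd : (diagonal (fun i => (((|lam i| : ℝ) - lam i : ℝ) : ℂ))).PosSemidef := by
    refine Matrix.posSemidef_diagonal_iff.mpr fun i => ?_
    exact_mod_cast Complex.zero_le_real.mpr (by simp [le_abs_self])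
  simpa [star_eq_conjTranspose] using hpsd.mul_mul_conjTranspose_same U

lemma key_pair' {B X Y : Matrix n n ℂ} (hX : X.PosSemidef) (hY : Y.PosSemidef)
    (hX2 : X * X = Bᴴ * B) (hY2 : Y * Y = B * Bᴴ)
    (hXY : X * Y = 0) (hYX : Y * X = 0) (hB2 : B * B = 0) :
    (X + Y - (B + Bᴴ)).PosSemidef := by
  set H := B + Bᴴ with hH
  have hHh : Hᴴ = H := by rw [hH, conjTranspose_add, conjTranspose_conjTranspose, add_comm]
  have hH2 : (H ^ 2).PosSemidef := by
    have h : H ^ 2 = Hᴴ * H := by rw [pow_two, hHh]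
    rw [h]
    exact posSemidef_conjTranspose_mul_self H
  have hsq : (X + Y) ^ 2 = H ^ 2 := by
    have hBh2 : Bᴴ * Bᴴ = 0 := by rw [← conjTranspose_mul, hB2, conjTranspose_zero]
    rw [pow_two, pow_two, hH, add_mul, mul_add, mul_add, add_mul, mul_add, mul_add,
      hXY, hYX, hX2, hY2, hB2, hBh2]
    abel
  have heq : X + Y = hH2.sqrt := (hX.add hY).eq_sqrt_of_sq_eq hH2 hsq
  rw [heq]
  exact sqrt_sq_sub_psd' hHh hH2

end Aux

set_option maxHeartbeats 1000000 in
/-- For pairwise orthogonal projections `P 1, …, P n` summing to the identity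
and a density matrix `ρ`, the robustness of block coherence is bounded by the `ℓ₁`-norm of
block coherence:
`inf { s ≥ 0 : ∃ density δ, ρ ≤ (1+s) • Δ[δ] } ≤ ∑_{i ≠ j} ‖P i ρ P j‖₁`. -/
theorem robustness_le_l1_block_coherence
    (n d : ℕ) (P : Fin n → Matrix (Fin d) (Fin d) ℂ)
    (hherm : ∀ i, (P i)ᴴ = P i)
    (hidem : ∀ i, P i * P i = P i)
    (horth : ∀ i j, i ≠ j → P i * P j = 0)
    (hsum : ∑ i, P i = 1)
    (ρ : Matrix (Fin d) (Fin d) ℂ) (hρ : ρ.PosSemidef) (hρtr : ρ.trace = 1) :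
    sInf { s : ℝ | 0 ≤ s ∧ ∃ δ : Matrix (Fin d) (Fin d) ℂ, δ.PosSemidef ∧ δ.trace = 1 ∧
        ((1 + s) • (∑ i, P i * δ * P i) - ρ).PosSemidef }
      ≤ ∑ q ∈ (Finset.univ : Finset (Fin n)).offDiag, traceNorm (P q.1 * ρ * P q.2) := by
  classical
  set od := (Finset.univ : Finset (Fin n)).offDiag with hod
  set s : ℝ := ∑ q ∈ od, traceNorm (P q.1 * ρ * P q.2) with hsdef
  set B : Fin n × Fin n → Matrix (Fin d) (Fin d) ℂ := fun q => P q.1 * ρ * P q.2 with hBdef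
  have hMpsd : ∀ q, ((B q)ᴴ * B q).PosSemidef := fun q =>
    Matrix.posSemidef_conjTranspose_mul_self _
  set M : Fin n × Fin n → Matrix (Fin d) (Fin d) ℂ := fun q => (hMpsd q).sqrt with hMdef
  -- basic facts about B
  have hρh : ρᴴ = ρ := hρ.1
  have hBherm : ∀ q : Fin n × Fin n, (B q)ᴴ = P q.2 * ρ * P q.1 := by
    intro q
    simp only [hBdef, conjTranspose_mul, hherm, hρh, mul_assoc]
  have hBswap : ∀ q : Fin n × Fin n, B q.swap = (B q)ᴴ := by
    intro q
    rw [hBherm]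
    rfl
  -- support facts for M
  have hsupp : ∀ q : Fin n × Fin n, M q * P q.2 = M q ∧ P q.2 * M q = M q := by
    intro q
    have h : P q.2 * (B q)ᴴ = (B q)ᴴ := by
      rw [hBherm, ← mul_assoc, ← mul_assoc, hidem]
    refine sqrt_support' (hMpsd q) (hherm q.2) ?_
    rw [← mul_assoc, h]
  -- trace of M
  have hMtr : ∀ q, (M q).trace = ((traceNorm (B q) : ℝ) : ℂ) := by
    intro q
    exact (psd_trace_re' (hMpsd q).posSemidef_sqrt).1
  have hMpsd' : ∀ q, (M q).PosSemidef := fun q => (hMpsd q).posSemidef_sqrt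
  -- dephasing fixes matrices supported in a single block
  have dephase : ∀ (A : Matrix (Fin d) (Fin d) ℂ) (j : Fin n), P j * A = A → A * P j = A →
      ∑ k, P k * A * P k = A := by
    intro A j h1 h2
    rw [Finset.sum_eq_single j]
    · rw [h1, h2]
    · intro k _ hk
      rw [← h1]
      simp only [← mul_assoc]
      rw [horth k j hk, zero_mul, zero_mul]
    · simp
  -- the dephased ρ
  set Dl : Matrix (Fin d) (Fin d) ℂ := ∑ i, P i * ρ * P i with hDl
  have hDlpsd : Dl.PosSemidef := by
    refine psd_sum' _ _ fun i _ => ?_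
    have := hρ.mul_mul_conjTranspose_same (P i)
    rwa [hherm] at this
  have hDltr : Dl.trace = 1 := by
    rw [hDl, trace_sum]
    have : ∀ i ∈ Finset.univ, (P i * ρ * P i).trace = (P i * ρ).trace := by
      intro i _
      rw [trace_mul_cycle, hidem]
    rw [Finset.sum_congr rfl this, ← trace_sum, ← Finset.sum_mul, hsum, one_mul, hρtr]
  have hDlfix : ∑ k, P k * Dl * P k = Dl := by
    have hterm : ∀ k, P k * Dl * P k = ∑ i, P k * (P i * ρ * P i) * P k := by
      intro k
      rw [hDl, Finset.mul_sum, Finset.sum_mul]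
    simp only [hterm]
    rw [Finset.sum_comm]
    refine Finset.sum_congr rfl fun i _ => ?_
    refine dephase (P i * ρ * P i) i ?_ ?_
    · rw [← mul_assoc, ← mul_assoc, hidem]
    · rw [mul_assoc, hidem]
  -- full matrix D
  set D : Matrix (Fin d) (Fin d) ℂ := Dl + ∑ q ∈ od, M q with hD
  have hDpsd : D.PosSemidef := hDlpsd.add (psd_sum' _ _ fun q _ => hMpsd' q)
  have hDtr : D.trace = (((1 + s : ℝ) : ℝ) : ℂ) := by
    rw [hD, trace_add, hDltr, trace_sum]
    have : ∑ q ∈ od, (M q).trace = ((s : ℝ) : ℂ) := by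
      rw [hsdef]
      push_cast
      exact Finset.sum_congr rfl fun q _ => hMtr q
    rw [this]
    push_cast
    ring
  have hDfix : ∑ k, P k * D * P k = D := by
    have hterm : ∀ k, P k * D * P k = P k * Dl * P k + ∑ q ∈ od, P k * M q * P k := by
      intro k
      rw [hD, mul_add, add_mul]
      congr 1
      rw [Finset.mul_sum, Finset.sum_mul]
    simp only [hterm]
    rw [Finset.sum_add_distrib, hDlfix, hD]
    congr 1
    rw [Finset.sum_comm]
    refine Finset.sum_congr rfl fun q _ => ?_
    exact dephase (M q) q.2 (hsupp q).2 (hsupp q).1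
  -- decomposition of ρ
  have hρdec : ρ = Dl + ∑ q ∈ od, B q := by
    have h1 : ρ = ∑ i, ∑ j, P i * ρ * P j := by
      calc ρ = (∑ i, P i) * ρ * (∑ j, P j) := by rw [hsum, one_mul, mul_one]
        _ = ∑ i, ∑ j, P i * ρ * P j := by
            rw [Finset.sum_mul, Finset.sum_mul]
            exact Finset.sum_congr rfl fun i _ => by rw [Finset.mul_sum]
    have h2 : ∑ i, ∑ j, P i * ρ * P j = ∑ q ∈ Finset.univ ×ˢ Finset.univ, B q := by
      rw [Finset.sum_product]
    have h3 : (Finset.univ ×ˢ Finset.univ : Finset (Fin n × Fin n))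
        = Finset.univ.diag ∪ od := by
      rw [hod, Finset.diag_union_offDiag]
    rw [h1, h2, h3, Finset.sum_union (Finset.disjoint_diag_offDiag _), Finset.sum_diag]
  -- the difference is PSD
  have hdiffpsd : (D - ρ).PosSemidef := by
    have hDsub : D - ρ = ∑ q ∈ od, (M q - B q) := by
      rw [hρdec, hD, Finset.sum_sub_distrib]
      abel
    set f : Fin n × Fin n → Matrix (Fin d) (Fin d) ℂ := fun q => M q - B q with hf
    have hswapmem : ∀ q : Fin n × Fin n, q ∈ od ↔ q.swap ∈ od := by
      intro q
      simp [hod, Finset.mem_offDiag, ne_comm]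
    have hswap : ∑ q ∈ od, f q.swap = ∑ q ∈ od, f q := by
      refine Finset.sum_equiv (Equiv.prodComm (Fin n) (Fin n)) ?_ ?_
      · intro q; exact hswapmem q
      · intro q _; rfl
    have hpair : ∀ q ∈ od, (f q + f q.swap).PosSemidef := by
      intro q hq
      have hne : q.1 ≠ q.2 := (Finset.mem_offDiag.mp hq).2.2
      have hXY : M q * M q.swap = 0 := by
        rw [← (hsupp q).1, ← (hsupp q.swap).2]
        have : q.swap.2 = q.1 := rfl
        rw [this, mul_assoc, ← mul_assoc (P q.2), horth q.2 q.1 (Ne.symm hne),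
          zero_mul, mul_zero]
      have hYX : M q.swap * M q = 0 := by
        rw [← (hsupp q.swap).1, ← (hsupp q).2]
        have : q.swap.2 = q.1 := rfl
        rw [this, mul_assoc, ← mul_assoc (P q.1), horth q.1 q.2 hne, zero_mul, mul_zero]
      have hB2 : B q * B q = 0 := by
        rw [hBdef]
        simp only [mul_assoc]
        rw [← mul_assoc (P q.2) (P q.1), horth q.2 q.1 (Ne.symm hne), zero_mul, mul_zero,
          mul_zero]
      have hY2 : M q.swap * M q.swap = B q * (B q)ᴴ := by
        rw [(hMpsd q.swap).sqrt_mul_self, hBswap, conjTranspose_conjTranspose]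
      have hkey := key_pair' (hMpsd' q) (hMpsd' q.swap) ((hMpsd q).sqrt_mul_self)
        hY2 hXY hYX hB2
      have : f q + f q.swap = M q + M q.swap - (B q + (B q)ᴴ) := by
        show M q - B q + (M q.swap - B q.swap) = _
        rw [hBswap]
        abel
      rw [this]
      exact hkey
    have h2T : (∑ q ∈ od, f q) = (2⁻¹ : ℝ) • ∑ q ∈ od, (f q + f q.swap) := by
      rw [Finset.sum_add_distrib, hswap, smul_add]
      rw [← add_smul]
      norm_num
    rw [hDsub, h2T]
    exact psd_smul' (by norm_num) (psd_sum' _ _ hpair)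
  -- conclusion
  have hs0 : (0 : ℝ) ≤ s := Finset.sum_nonneg fun q _ => traceNorm_nonneg' _
  have h1s : (0 : ℝ) < 1 + s := by linarith
  clear_value D Dl M B s
  refine csInf_le ⟨0, fun x hx => hx.1⟩ ?_
  refine ⟨hs0, ((1 + s)⁻¹ : ℝ) • D,
    psd_smul' (inv_nonneg.mpr h1s.le) hDpsd, ?_, ?_⟩
  · rw [trace_smul, hDtr]
    rw [Complex.real_smul, ← Complex.ofReal_mul, inv_mul_cancel₀ (ne_of_gt h1s),
      Complex.ofReal_one]
  · have hΔ : ∑ i, P i * (((1 + s)⁻¹ : ℝ) • D) * P i = ((1 + s)⁻¹ : ℝ) • D := by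
      have : ∀ i, P i * (((1 + s)⁻¹ : ℝ) • D) * P i
          = ((1 + s)⁻¹ : ℝ) • (P i * D * P i) := by
        intro i
        rw [mul_smul_comm, smul_mul_assoc]
      simp only [this]
      rw [← Finset.smul_sum, hDfix]
    rw [hΔ, smul_smul, mul_inv_cancel₀ (ne_of_gt h1s), one_smul]
    exact hdiffpsd
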